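/- Assume a periodic lattice Γ₀ admits, around every sufficiently large finite region Ω_R, a finite subgraph {Ṽ° ∪ ∂Ṽ, Ẽ} with Ω_R ⊂ Ṽ° that satisfies the two-points condition and the condition (A-5) (any two interior neighbors of a common boundary vertex are adjacent), and assume that on such subgraphs there is no nontrivial solution of (−Δ + V̂ − λ)û = 0 in Ṽ° satisfying both zero Dirichlet and zero Neumann conditions on ∂Ṽ. Then the unique continuation property holds on Γ₀: if û solves (Ĥ − λ)û = 0 on 𝒱₀ and û(n) = 0 for all |n| > R, then û ≡ 0 on 𝒱₀. -/

import Mathlib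

open Finset

/-- The finite subgraph on `Ṽ° ∪ ∂Ṽ` whose edges are lattice edges with at least one
interior end point (no boundary-boundary edges). -/
def bdSubgraph {V : Type*} [DecidableEq V] (G : SimpleGraph V) (Vint Vbd : Finset V) :
    SimpleGraph ↥((Vint ∪ Vbd : Finset V) : Set V) where
  Adj a b := G.Adj a.1 b.1 ∧ (a.1 ∈ Vint ∨ b.1 ∈ Vint)
  symm := ⟨fun a b h => ⟨h.1.symm, h.2.symm⟩⟩
  loopless := ⟨fun a h => G.loopless.1 a.1 h.1⟩

/-- `v` is an extreme point of `S ⊆ Ṽ°` with respect to `∂Ṽ`: some boundary vertex `w`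
has `v` as its unique nearest vertex in `S` for the graph distance of the subgraph. -/
def bdExtreme {V : Type*} [DecidableEq V] (G : SimpleGraph V) (Vint Vbd : Finset V)
    (S : Finset ↥((Vint ∪ Vbd : Finset V) : Set V))
    (v : ↥((Vint ∪ Vbd : Finset V) : Set V)) : Prop :=
  v ∈ S ∧ ∃ w : ↥((Vint ∪ Vbd : Finset V) : Set V), w.1 ∈ Vbd ∧
    ∀ u ∈ S, u ≠ v → (bdSubgraph G Vint Vbd).dist w v < (bdSubgraph G Vint Vbd).dist w u

/-- The two-points condition: every `S ⊆ Ṽ°` with `#S ≥ 2` has at least two extreme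
points with respect to `∂Ṽ`. -/
def twoPointsCondition {V : Type*} [DecidableEq V] (G : SimpleGraph V)
    (Vint Vbd : Finset V) : Prop :=
  ∀ S : Finset ↥((Vint ∪ Vbd : Finset V) : Set V),
    (∀ v ∈ S, v.1 ∈ Vint) → 2 ≤ S.card →
      ∃ v ∈ S, ∃ w ∈ S, v ≠ w ∧ bdExtreme G Vint Vbd S v ∧ bdExtreme G Vint Vbd S w

/-- Suppose that around every sufficiently large finite region there is a
finite subgraph (interior ⊇ region, boundary = neighbors of interior) satisfying the
two-points condition and (A-5), on which there is no nontrivial solution of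
`(−Δ + V̂ − λ)û = 0` with both zero Dirichlet and zero Neumann data on the boundary.
Then the unique continuation property holds: a solution of `(Ĥ − λ)û = 0` vanishing
outside a finite region vanishes identically. -/
theorem stmt_17 {V : Type*} [DecidableEq V] (G : SimpleGraph V) [DecidableRel G.Adj]
    [G.LocallyFinite] (ρ : V → ℝ) (Vh : V → ℂ) (lam : ℂ) (R : ℝ)
    (hsub : ∀ R' : ℝ, ∃ Vint Vbd : Finset V,
      (∀ v : V, ρ v ≤ R' → v ∈ Vint) ∧
      (∀ v : V, v ∈ Vbd ↔ v ∉ Vint ∧ ∃ w ∈ Vint, G.Adj v w) ∧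
      -- (A-5): two interior neighbors of a common boundary vertex are adjacent
      (∀ z ∈ Vbd, ∀ v ∈ Vint, ∀ w ∈ Vint, G.Adj z v → G.Adj z w → v ≠ w → G.Adj v w) ∧
      twoPointsCondition G Vint Vbd ∧
      -- no nontrivial Dirichlet–Neumann solution on the subgraph
      (∀ u : V → ℂ,
        (∀ v ∈ Vint,
          -((G.degree v : ℂ))⁻¹ * ∑ w ∈ G.neighborFinset v, u w + Vh v * u v
            - lam * u v = 0) →
        (∀ v ∈ Vbd, u v = 0) →
        (∀ v ∈ Vbd, ∑ w ∈ (G.neighborFinset v).filter (· ∈ Vint), (u w - u v) = 0) →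
        ∀ v ∈ Vint, u v = 0))
    (u : V → ℂ)
    (hu : ∀ v : V,
      -((G.degree v : ℂ))⁻¹ * ∑ w ∈ G.neighborFinset v, u w + Vh v * u v = lam * u v)
    (hvanish : ∀ v : V, R < ρ v → u v = 0) :
    ∀ v : V, u v = 0 := by
  obtain ⟨Vint, Vbd, hR, hbd, _, _, hnosol⟩ := hsub R
  have hout : ∀ v, v ∉ Vint → u v = 0 := fun v hv => by
    by_contra h
    exact hv (hR v (le_of_not_gt fun hlt => h (hvanish v hlt)))
  have hintsol : ∀ v ∈ Vint,
      -((G.degree v : ℂ))⁻¹ * ∑ w ∈ G.neighborFinset v, u w + Vh v * u v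
        - lam * u v = 0 := fun v _ => by rw [hu v]; ring
  have hdir : ∀ v ∈ Vbd, u v = 0 := fun v hv => hout v ((hbd v).1 hv).1
  have hneu : ∀ v ∈ Vbd, ∑ w ∈ (G.neighborFinset v).filter (· ∈ Vint), (u w - u v) = 0 := by
    intro v hv
    have huv : u v = 0 := hdir v hv
    have hsum : ∑ w ∈ G.neighborFinset v, u w = 0 := by
      rcases eq_or_ne (G.degree v) 0 with hd | hd
      · have hc : (G.neighborFinset v).card = 0 := by
          rw [SimpleGraph.card_neighborFinset_eq_degree]; exact hd
        rw [Finset.card_eq_zero.mp hc, Finset.sum_empty]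
      · have := hu v
        rw [huv, mul_zero, mul_zero, add_zero] at this
        have hd' : ((G.degree v : ℂ)) ≠ 0 := Nat.cast_ne_zero.mpr hd
        field_simp at this
        exact neg_eq_zero.mp (this.trans (mul_zero _))
    have hsplit : ∑ w ∈ (G.neighborFinset v).filter (· ∈ Vint), u w
        = ∑ w ∈ G.neighborFinset v, u w := by
      apply Finset.sum_filter_of_ne
      intro w _ hw
      by_contra hwint
      exact hw (hout w hwint)
    simp only [huv, sub_zero]
    rw [hsplit, hsum]
  have hzero := hnosol u hintsol hdir hneu
  intro v
  by_cases hv : v ∈ Vint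
  · exact hzero v hv
  · exact hout v hv
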